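/- Let α := lim_{n→∞} c_n/2^n (this limit exists). Then α = 1/16 − 2·∑_{n=4}^∞ c_n/4^n, where the infinite series converges. -/

import Mathlib

/-- The Conway number (correlation) `C(A,B)` of two head/tail strings of length `n`,
encoded as functions `Fin n → Bool` (with `H = true`, `T = false`, and 0-indexed
positions): `C(A,B) = ∑_{i=1}^n δ_i 2^{n-i}` where `δ_i = 1` iff `a_{i+j} = b_{1+j}`
for all `j = 0,…,n-i`. -/
def conway {n : ℕ} (A B : Fin n → Bool) : ℕ :=
  ∑ i : Fin n,
    if (∀ j : Fin n, (i : ℕ) + (j : ℕ) < n → A (i + j) = B j) then 2 ^ (n - 1 - (i : ℕ)) else 0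

/-- `cstar m` is the number of head/tail strings of length `m` beginning with `HT`,
ending with `TH`, whose autocorrelation is `2^{m-1} + 1`. -/
def cstar (m : ℕ) : ℕ :=
  Fintype.card {A : Fin m → Bool //
    (∀ i : Fin m, (i : ℕ) = 0 → A i = true) ∧
    (∀ i : Fin m, (i : ℕ) = 1 → A i = false) ∧
    (∀ i : Fin m, (i : ℕ) = m - 2 → A i = false) ∧
    (∀ i : Fin m, (i : ℕ) = m - 1 → A i = true) ∧
    conway A A = 2 ^ (m - 1) + 1}

/-- `c n = 2 * cstar (n-1)`: by Csirik's characterization, the number of optimal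
strategies for Player I in the Penney-Ante game with strings of length `n`. -/
def c (n : ℕ) : ℕ := 2 * cstar (n - 1)

namespace PA

/-- extend a `Fin m`-string to `ℕ` by `false`. -/
def ext {m : ℕ} (A : Fin m → Bool) (i : ℕ) : Bool := if h : i < m then A ⟨i, h⟩ else false

/-- `a` (of length `m`) has a border of length `L`. -/
def Brd (m L : ℕ) (a : ℕ → Bool) : Prop := ∀ j < L, a (m - L + j) = a j

instance (m L : ℕ) (a : ℕ → Bool) : Decidable (Brd m L a) := by unfold Brd; infer_instance

/-- `a` is a good string of length `m`: starts `HT`, ends `TH`, no border of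
length in `[2, m-1]`. -/
def Good (m : ℕ) (a : ℕ → Bool) : Prop :=
  a 0 = true ∧ a 1 = false ∧ a (m-2) = false ∧ a (m-1) = true ∧
    ∀ L < m, 2 ≤ L → ¬ Brd m L a

instance (m : ℕ) (a : ℕ → Bool) : Decidable (Good m a) := by unfold Good; infer_instance

lemma brd_congr {m L : ℕ} {a b : ℕ → Bool} (h : ∀ i < m, a i = b i) (hL : L ≤ m) :
    Brd m L a ↔ Brd m L b := by
  unfold Brd
  constructor <;> intro hb j hj
  · rw [← h _ (by omega), ← h _ (by omega)]; exact hb j hj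
  · rw [h _ (by omega), h _ (by omega)]; exact hb j hj

lemma good_congr {m : ℕ} {a b : ℕ → Bool} (h : ∀ i < m, a i = b i) (hm : 3 ≤ m) :
    Good m a ↔ Good m b := by
  unfold Good
  rw [h 0 (by omega), h 1 (by omega), h (m-2) (by omega), h (m-1) (by omega)]
  refine and_congr_right fun _ => and_congr_right fun _ => and_congr_right fun _ =>
    and_congr_right fun _ => ?_
  exact forall_congr' fun L => forall_congr' fun hL => forall_congr' fun _ =>
    not_congr (brd_congr h (by omega))

end PA

namespace PA

lemma ext_lt {m : ℕ} (A : Fin m → Bool) {i : ℕ} (h : i < m) : ext A i = A ⟨i, h⟩ := dif_pos h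

lemma endpoint_iff {m c : ℕ} (A : Fin m → Bool) (v : Bool) (hc : c < m) :
    (∀ i : Fin m, (i : ℕ) = c → A i = v) ↔ ext A c = v := by
  constructor
  · intro h; rw [ext_lt A hc]; exact h _ rfl
  · intro h i hi
    have : i = ⟨c, hc⟩ := Fin.ext hi
    rw [this, ← ext_lt A hc, h]

lemma delta_iff {m : ℕ} (A : Fin m → Bool) (i : Fin m) :
    (∀ j : Fin m, (i : ℕ) + (j : ℕ) < m → A (i + j) = A j) ↔ Brd m (m - (i : ℕ)) (ext A) := by
  have him : (i : ℕ) < m := i.isLt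
  constructor
  · intro h j hj
    have hj' : j < m := by omega
    have hij : (i : ℕ) + j < m := by omega
    have := h ⟨j, hj'⟩ (by simpa using hij)
    rw [ext_lt A (show m - (m - (i:ℕ)) + j < m by omega), ext_lt A hj']
    convert this using 2
    apply Fin.ext
    simp only [Fin.val_add]
    rw [Nat.mod_eq_of_lt (by omega)]
    omega
  · intro h j hj
    have := h (j : ℕ) (by omega)
    rw [ext_lt A (show m - (m - (i:ℕ)) + (j:ℕ) < m by omega)] at this
    rw [ext_lt A j.isLt] at this
    have e1 : (⟨(j:ℕ), j.isLt⟩ : Fin m) = j := rfl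
    rw [e1] at this
    rw [← this]
    congr 1
    apply Fin.ext
    simp only [Fin.val_add]
    rw [Nat.mod_eq_of_lt (by omega)]
    omega

lemma conway_self_iff {m : ℕ} (hm : 3 ≤ m) (A : Fin m → Bool)
    (h0 : ext A 0 = true) (h3 : ext A (m-1) = true) :
    conway A A = 2 ^ (m - 1) + 1 ↔ ∀ L < m, 2 ≤ L → ¬ Brd m L (ext A) := by
  classical
  set f : Fin m → ℕ := fun i => if Brd m (m - (i : ℕ)) (ext A) then 2 ^ (m - 1 - (i : ℕ)) else 0
    with hf
  have hconv : conway A A = ∑ i : Fin m, f i := by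
    unfold conway
    refine Finset.sum_congr rfl fun i _ => ?_
    by_cases h : Brd m (m - (i : ℕ)) (ext A)
    · rw [if_pos ((delta_iff A i).mpr h), hf]; simp [h]
    · rw [if_neg (fun hh => h ((delta_iff A i).mp hh)), hf]; simp [h]
  set i0 : Fin m := ⟨0, by omega⟩ with hi0
  set i1 : Fin m := ⟨m - 1, by omega⟩ with hi1
  have hne : i1 ≠ i0 := by simp [hi0, hi1, Fin.ext_iff]; omega
  have h01 : i1 ∈ Finset.univ.erase i0 := Finset.mem_erase.mpr ⟨hne, Finset.mem_univ _⟩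
  have e1 : ∑ i : Fin m, f i = f i0 + ∑ i ∈ Finset.univ.erase i0, f i :=
    (Finset.add_sum_erase _ f (Finset.mem_univ i0)).symm
  have e2 : ∑ i ∈ Finset.univ.erase i0, f i
      = f i1 + ∑ i ∈ (Finset.univ.erase i0).erase i1, f i :=
    (Finset.add_sum_erase _ f h01).symm
  have hfi0 : f i0 = 2 ^ (m - 1) := by
    have hb : Brd m (m - ((i0 : Fin m) : ℕ)) (ext A) := by
      intro j hj
      have : ((i0 : Fin m) : ℕ) = 0 := rfl
      rw [this] at hj ⊢
      congr 1
      omega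
    simp only [hf]
    rw [if_pos hb]
    norm_num [hi0]
  have hfi1 : f i1 = 1 := by
    have hb : Brd m (m - ((i1 : Fin m) : ℕ)) (ext A) := by
      intro j hj
      have hv : ((i1 : Fin m) : ℕ) = m - 1 := rfl
      rw [hv] at hj ⊢
      have : j = 0 := by omega
      subst this
      have e : m - (m - (m-1)) + 0 = m - 1 := by omega
      rw [e, h3, h0]
    simp only [hf]
    rw [if_pos hb]
    norm_num [hi1]
  rw [hconv, e1, e2, hfi0, hfi1]
  have key : (∀ i ∈ (Finset.univ.erase i0).erase i1, f i = 0) ↔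
      (∀ L < m, 2 ≤ L → ¬ Brd m L (ext A)) := by
    constructor
    · intro h L hL hL2
      have hmem : (⟨m - L, by omega⟩ : Fin m) ∈ (Finset.univ.erase i0).erase i1 := by
        refine Finset.mem_erase.mpr ⟨?_, Finset.mem_erase.mpr ⟨?_, Finset.mem_univ _⟩⟩
        · simp only [hi1, ne_eq, Fin.mk.injEq]; omega
        · simp only [hi0, ne_eq, Fin.mk.injEq]; omega
      have := h _ hmem
      simp only [hf] at this
      intro hb
      have e : m - (m - L) = L := by omega
      rw [e] at this
      rw [if_pos hb] at this
      exact absurd this (by positivity)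
    · intro h i hi
      rcases Finset.mem_erase.mp hi with ⟨hne1, hi'⟩
      rcases Finset.mem_erase.mp hi' with ⟨hne0, -⟩
      have h1 : (i : ℕ) ≠ m - 1 := fun h => hne1 (Fin.ext h)
      have h2 : (i : ℕ) ≠ 0 := fun h => hne0 (Fin.ext h)
      simp only [hf]
      rw [if_neg (h (m - (i:ℕ)) (by omega) (by omega))]
  constructor
  · intro h
    have hz : ∑ i ∈ (Finset.univ.erase i0).erase i1, f i = 0 := by omega
    rw [Finset.sum_eq_zero_iff] at hz
    exact key.mp hz
  · intro h
    rw [show ∑ i ∈ (Finset.univ.erase i0).erase i1, f i = 0 from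
      Finset.sum_eq_zero_iff.mpr (key.mpr h)]


def GoodP (m : ℕ) (A : Fin m → Bool) : Prop := Good m (ext A)

instance (m : ℕ) : DecidablePred (GoodP m) :=
  fun A => inferInstanceAs (Decidable (Good m (ext A)))

/-- the number of good strings of length `m`. -/
def B (m : ℕ) : ℕ := Fintype.card {A : Fin m → Bool // GoodP m A}

lemma cstar_eq {m : ℕ} (hm : 3 ≤ m) : cstar m = B m := by
  apply Fintype.card_congr
  apply Equiv.subtypeEquivRight
  intro A
  unfold GoodP Good
  constructor
  · rintro ⟨p0, p1, p2, p3, p4⟩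
    have e0 := (endpoint_iff A true (by omega : 0 < m)).mp p0
    have e1 := (endpoint_iff A false (by omega : 1 < m)).mp p1
    have e2 := (endpoint_iff A false (by omega : m - 2 < m)).mp p2
    have e3 := (endpoint_iff A true (by omega : m - 1 < m)).mp p3
    exact ⟨e0, e1, e2, e3, (conway_self_iff hm A e0 e3).mp p4⟩
  · rintro ⟨e0, e1, e2, e3, e4⟩
    exact ⟨(endpoint_iff A true (by omega : 0 < m)).mpr e0,
      (endpoint_iff A false (by omega : 1 < m)).mpr e1,
      (endpoint_iff A false (by omega : m - 2 < m)).mpr e2,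
      (endpoint_iff A true (by omega : m - 1 < m)).mpr e3,
      (conway_self_iff hm A e0 e3).mpr e4⟩

lemma B_le (m : ℕ) : B m ≤ 2 ^ m := by
  have h := Fintype.card_subtype_le (fun A : Fin m → Bool => GoodP m A)
  simpa [B] using h


lemma brd_step {m L : ℕ} {a : ℕ → Bool} (h : Brd m L a) (hL : L ≤ m) (h2 : m < 2*L) :
    Brd m (2*L - m) a := by
  intro j hj
  have e : m - (2*L - m) + j = (m - L) + ((m - L) + j) := by omega
  rw [e, h _ (by omega), h _ (by omega)]

lemma brd_small {m : ℕ} {a : ℕ → Bool} :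
    ∀ L, Brd m L a → 2 ≤ L → L < m → ∃ L', 2 ≤ L' ∧ 2*L' ≤ m + 1 ∧ Brd m L' a := by
  intro L
  induction L using Nat.strong_induction_on with
  | _ L ih =>
    intro h h2 hL
    by_cases hsm : 2*L ≤ m+1
    · exact ⟨L, h2, hsm, h⟩
    · exact ih (2*L - m) (by omega) (brd_step h (by omega) (by omega)) (by omega) (by omega)


def restrict (m : ℕ) (a : ℕ → Bool) : Fin m → Bool := fun i => a i

lemma ext_restrict_eq {m : ℕ} (a : ℕ → Bool) (hs : ∀ i, m ≤ i → a i = false) :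
    ext (restrict m a) = a := by
  funext i
  unfold ext restrict
  split
  · rfl
  · exact (hs i (by omega)).symm

/-- good strings of length `m` as `ℕ → Bool` functions supported below `m`. -/
abbrev T (m : ℕ) : Type := {a : ℕ → Bool // Good m a ∧ ∀ i, m ≤ i → a i = false}

def subEquivT (m : ℕ) (hm : 3 ≤ m) : {A : Fin m → Bool // GoodP m A} ≃ T m where
  toFun A := ⟨ext A.val, A.2, fun i hi => dif_neg (by omega)⟩
  invFun a := ⟨restrict m a.val,
    (good_congr (fun i hi => by rw [ext_restrict_eq a.val a.2.2]) hm).mpr a.2.1⟩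
  left_inv A := by
    apply Subtype.ext
    funext i
    show ext A.val i.val = A.val i
    rw [ext_lt A.val i.isLt]
  right_inv a := by
    apply Subtype.ext
    exact ext_restrict_eq a.val a.2.2

lemma finite_T (m : ℕ) (hm : 3 ≤ m) : Finite (T m) := .of_equiv _ (subEquivT m hm)

lemma B_eq_card_T {m : ℕ} (hm : 3 ≤ m) : B m = Nat.card (T m) := by
  rw [B, ← Nat.card_eq_fintype_card]
  exact Nat.card_congr (subEquivT m hm)

/-- delete the letter at position `p`. -/
def del (p : ℕ) (a : ℕ → Bool) : ℕ → Bool := fun i => if i < p then a i else a (i+1)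

/-- insert letter `b` at position `p`. -/
def ins (p : ℕ) (b : Bool) (a : ℕ → Bool) : ℕ → Bool :=
  fun i => if i < p then a i else if i = p then b else a (i-1)

lemma del_ins (p : ℕ) (b : Bool) (a : ℕ → Bool) : del p (ins p b a) = a := by
  funext i
  unfold del ins
  split_ifs with h1 h2 h3 h4 <;> first | rfl | omega | (congr 1; omega)

lemma ins_del (p : ℕ) (a : ℕ → Bool) : ins p (a p) (del p a) = a := by
  funext i
  show (if i < p then del p a i else if i = p then a p else del p a (i-1)) = a i
  unfold del
  split_ifs with h1 h2 h3 h4 <;> first | rfl | omega | (congr 1; omega) | (rw [h2])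


lemma del_lt {p i : ℕ} (a : ℕ → Bool) (h : i < p) : del p a i = a i := if_pos h

lemma del_ge {p i : ℕ} (a : ℕ → Bool) (h : p ≤ i) : del p a i = a (i+1) := if_neg (by omega)

lemma ins_lt {p i : ℕ} (b : Bool) (a : ℕ → Bool) (h : i < p) : ins p b a i = a i := if_pos h

lemma ins_at {p : ℕ} (b : Bool) (a : ℕ → Bool) : ins p b a p = b := by
  unfold ins; rw [if_neg (lt_irrefl p), if_pos rfl]

lemma ins_gt {p i : ℕ} (b : Bool) (a : ℕ → Bool) (h : p < i) : ins p b a i = a (i-1) := by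
  unfold ins; rw [if_neg (by omega), if_neg (by omega)]

/-! ### The odd case: strings of length `2k+1` vs `2k` and `k+1`. -/

lemma brd_del_odd {k L : ℕ} (hL1 : 1 ≤ L) (hLk : L ≤ k) (w : ℕ → Bool) :
    Brd (2*k+1) L w ↔ Brd (2*k) L (del k w) := by
  unfold Brd
  constructor <;> intro h j hj
  · rw [del_ge w (by omega), del_lt w (by omega),
      show 2*k - L + j + 1 = 2*k+1 - L + j from by omega]
    exact h j hj
  · have := h j hj
    rw [del_ge w (by omega), del_lt w (by omega),
      show 2*k - L + j + 1 = 2*k+1 - L + j from by omega] at this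
    exact this

lemma good_del_odd {k : ℕ} (hk : 2 ≤ k) {w : ℕ → Bool} (hw : Good (2*k+1) w) :
    Good (2*k) (del k w) := by
  obtain ⟨h0, h1, h2, h3, h4⟩ := hw
  refine ⟨?_, ?_, ?_, ?_, ?_⟩
  · rw [del_lt w (by omega)]; exact h0
  · rw [del_lt w (by omega)]; exact h1
  · rw [del_ge w (by omega), show 2*k-2+1 = 2*k+1-2 from by omega]; exact h2
  · rw [del_ge w (by omega), show 2*k-1+1 = 2*k+1-1 from by omega]; exact h3
  · intro L hL hL2 hb
    obtain ⟨L', hL'2, hL'le, hb'⟩ := brd_small L hb hL2 hL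
    exact h4 L' (by omega) (by omega) ((brd_del_odd (by omega) (by omega) w).mpr hb')

lemma good_ins_odd {k : ℕ} (hk : 2 ≤ k) {b : Bool} {u : ℕ → Bool} (hu : Good (2*k) u)
    (hnb : ¬ Brd (2*k+1) (k+1) (ins k b u)) : Good (2*k+1) (ins k b u) := by
  obtain ⟨h0, h1, h2, h3, h4⟩ := hu
  refine ⟨?_, ?_, ?_, ?_, ?_⟩
  · rw [ins_lt b u (by omega)]; exact h0
  · rw [ins_lt b u (by omega)]; exact h1
  · rw [show 2*k+1-2 = 2*k-1 from by omega, ins_gt b u (by omega),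
      show 2*k-1-1 = 2*k-2 from by omega]; exact h2
  · rw [show 2*k+1-1 = 2*k from by omega, ins_gt b u (by omega)]; exact h3
  · intro L hL hL2 hb
    obtain ⟨L', hL'2, hL'le, hb'⟩ := brd_small L hb hL2 hL
    by_cases hE : L' = k+1
    · exact hnb (hE ▸ hb')
    · have h' := (brd_del_odd (by omega) (by omega : L' ≤ k) (ins k b u)).mp hb'
      rw [del_ins] at h'
      exact h4 L' (by omega) (by omega) h'

/-- the extracted half-string of length `k+1`. -/
def zext (k : ℕ) (w : ℕ → Bool) : ℕ → Bool := fun i => if i ≤ k then w (k+i) else false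

/-- the doubled string of length `2k+1` built from a string of length `k+1`. -/
def wext (k : ℕ) (z : ℕ → Bool) : ℕ → Bool :=
  fun i => if i < k then z i else if i ≤ 2*k then z (i-k) else false

lemma per_of_brd {k : ℕ} {w : ℕ → Bool} (hb : Brd (2*k+1) (k+1) w) :
    ∀ j < k+1, w (k + j) = w j := by
  intro j hj
  have := hb j hj
  rwa [show 2*k+1 - (k+1) + j = k + j from by omega] at this

lemma good_zext_odd {k : ℕ} (hk : 2 ≤ k) {b : Bool} {u : ℕ → Bool} (hu : Good (2*k) u)
    (hb : Brd (2*k+1) (k+1) (ins k b u)) : Good (k+1) (zext k (ins k b u)) := by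
  set w := ins k b u with hw
  have hper := per_of_brd hb
  obtain ⟨h0, h1, h2, h3, h4⟩ := hu
  have hz : ∀ i ≤ k, zext k w i = w (k + i) := fun i hi => if_pos hi
  refine ⟨?_, ?_, ?_, ?_, ?_⟩
  · rw [hz 0 (by omega), hper 0 (by omega), hw, ins_lt b u (by omega)]; exact h0
  · rw [hz 1 (by omega), hper 1 (by omega), hw, ins_lt b u (by omega)]; exact h1
  · rw [show k+1-2 = k-1 from by omega, hz (k-1) (by omega)]
    rw [show k + (k-1) = 2*k-1 from by omega, hw, ins_gt b u (by omega),
      show 2*k-1-1 = 2*k-2 from by omega]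
    exact h2
  · rw [show k+1-1 = k from by omega, hz k (by omega),
      show k + k = 2*k from by omega, hw, ins_gt b u (by omega)]
    exact h3
  · intro L hL hL2 hbz
    have hbw : Brd (2*k+1) L w := by
      intro j hj
      have e1 := hbz j hj
      rw [hz _ (by omega), hz _ (by omega)] at e1
      rw [show 2*k+1 - L + j = k + (k+1-L+j) from by omega, e1, hper j (by omega)]
    have h' := (brd_del_odd (by omega) (by omega : L ≤ k) w).mp hbw
    rw [hw, del_ins] at h'
    exact h4 L (by omega) (by omega) h'

lemma wext_brd {k : ℕ} {z : ℕ → Bool} (hk : 1 ≤ k) (hz0 : z 0 = true) (hzk : z k = true) :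
    Brd (2*k+1) (k+1) (wext k z) := by
  intro j hj
  rw [show 2*k+1 - (k+1) + j = k + j from by omega]
  unfold wext
  rw [if_neg (by omega : ¬ k + j < k), if_pos (by omega : k + j ≤ 2*k),
    show k + j - k = j from by omega]
  by_cases hjk : j < k
  · rw [if_pos hjk]
  · rw [if_neg hjk, if_pos (by omega), show j - k = 0 from by omega]
    have : j = k := by omega
    rw [this, hzk, hz0]

lemma wext_zborder {k L : ℕ} {z : ℕ → Bool} (hk : 2 ≤ k) (hL2 : 2 ≤ L) (hLk : L ≤ k)
    (hb : Brd (2*k+1) L (wext k z)) : Brd (k+1) L z := by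
  intro j hj
  have h1 := hb j hj
  rw [show 2*k+1 - L + j = k + (k+1-L+j) from by omega] at h1
  unfold wext at h1
  rw [if_neg (by omega : ¬ k + (k+1-L+j) < k), if_pos (by omega),
    show k + (k+1-L+j) - k = k+1-L+j from by omega, if_pos (by omega : j < k)] at h1
  exact h1

lemma good_del_wext {k : ℕ} (hk : 2 ≤ k) {z : ℕ → Bool} (hz : Good (k+1) z) :
    Good (2*k) (del k (wext k z)) := by
  obtain ⟨h0, h1, h2, h3, h4⟩ := hz
  set w := wext k z with hw
  have hwlt : ∀ i < k, w i = z i := fun i hi => if_pos hi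
  have hwge : ∀ i, k ≤ i → i ≤ 2*k → w i = z (i - k) := by
    intro i hi1 hi2
    rw [hw]
    unfold wext
    rw [if_neg (by omega), if_pos hi2]
  refine ⟨?_, ?_, ?_, ?_, ?_⟩
  · rw [del_lt w (by omega), hwlt 0 (by omega)]; exact h0
  · rw [del_lt w (by omega), hwlt 1 (by omega)]; exact h1
  · rw [del_ge w (by omega), show 2*k-2+1 = 2*k-1 from by omega,
      hwge (2*k-1) (by omega) (by omega), show 2*k-1-k = k-1 from by omega,
      show k - 1 = k+1-2 from by omega]
    exact h2
  · rw [del_ge w (by omega), show 2*k-1+1 = 2*k from by omega,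
      hwge (2*k) (by omega) (by omega), show 2*k-k = k from by omega,
      show k = k+1-1 from by omega]
    exact h3
  · intro L hL hL2 hb
    obtain ⟨L', hL'2, hL'le, hb'⟩ := brd_small L hb hL2 hL
    have hbw : Brd (2*k+1) L' w := (brd_del_odd (by omega) (by omega : L' ≤ k) w).mpr hb'
    exact h4 L' (by omega) (by omega) (wext_zborder hk (by omega) (by omega) hbw)


lemma supp_ins {m p : ℕ} {b : Bool} {u : ℕ → Bool} (hs : ∀ i, m ≤ i → u i = false)
    (hp : p < m) : ∀ i, m + 1 ≤ i → ins p b u i = false := by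
  intro i hi
  have h2 : p < i := by omega
  rw [ins_gt b u h2]
  exact hs _ (by omega)
lemma supp_del {m p : ℕ} {w : ℕ → Bool} (hs : ∀ i, m + 1 ≤ i → w i = false) (hp : p ≤ m) :
    ∀ i, m ≤ i → del p w i = false := by
  intro i hi
  rw [del_ge w (by omega)]
  exact hs _ (by omega)

lemma supp_zext {k : ℕ} (w : ℕ → Bool) : ∀ i, k + 1 ≤ i → zext k w i = false :=
  fun i hi => if_neg (by omega)

lemma supp_wext {k : ℕ} (z : ℕ → Bool) : ∀ i, 2*k + 1 ≤ i → wext k z i = false := by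
  intro i hi
  unfold wext
  rw [if_neg (by omega), if_neg (by omega)]

lemma wext_zext {k : ℕ} {b : Bool} {u : ℕ → Bool} (hb : Brd (2*k+1) (k+1) (ins k b u))
    (hs : ∀ i, 2*k ≤ i → u i = false) : wext k (zext k (ins k b u)) = ins k b u := by
  have hper := per_of_brd hb
  funext i
  unfold wext zext
  by_cases h1 : i < k
  · rw [if_pos h1, if_pos (by omega)]
    exact hper i (by omega)
  · rw [if_neg h1]
    by_cases h2 : i ≤ 2*k
    · rw [if_pos h2, if_pos (by omega), show k + (i - k) = i from by omega]
    · rw [if_neg h2, ins_gt b u (by omega), hs _ (by omega)]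

lemma b_true {k : ℕ} {b : Bool} {u : ℕ → Bool} (hk : 1 ≤ k)
    (hb : Brd (2*k+1) (k+1) (ins k b u)) (hu0 : u 0 = true) : b = true := by
  have hper := per_of_brd hb
  have h1 : ins k b u k = b := ins_at b u
  have h2 := hper 0 (by omega)
  rw [show k + 0 = k from by omega, h1, ins_lt b u (by omega), hu0] at h2
  exact h2

lemma zext_wext {k : ℕ} {z : ℕ → Bool} (hzs : ∀ i, k + 1 ≤ i → z i = false) :
    zext k (wext k z) = z := by
  funext i
  unfold zext wext
  by_cases h1 : i ≤ k
  · rw [if_pos h1, if_neg (by omega), if_pos (by omega), show k + i - k = i from by omega]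
  · rw [if_neg h1, hzs _ (by omega)]

lemma ins_del_wext {k : ℕ} {z : ℕ → Bool} (hz0 : z 0 = true) (hk : 1 ≤ k) :
    ins k true (del k (wext k z)) = wext k z := by
  have h : wext k z k = true := by
    unfold wext
    rw [if_neg (by omega), if_pos (by omega), show k - k = 0 from by omega, hz0]
  rw [← h, ins_del]

/-- the gluing map for the odd case. -/
def oddF (k : ℕ) (hk : 2 ≤ k) : T (2*k+1) ⊕ T (k+1) → T (2*k) × Bool :=
  fun q =>
    match q with
    | .inl W => (⟨del k W.val, good_del_odd hk W.2.1, supp_del W.2.2 (by omega)⟩, W.val k)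
    | .inr Z => (⟨del k (wext k Z.val), good_del_wext hk Z.2.1,
        supp_del (supp_wext Z.val) (by omega)⟩, true)

lemma oddF_bij (k : ℕ) (hk : 2 ≤ k) : Function.Bijective (oddF k hk) := by
  constructor
  · rintro (W | Z) (W' | Z') h <;>
      simp only [oddF, Prod.mk.injEq, Subtype.mk.injEq] at h
    · obtain ⟨h1, h2⟩ := h
      refine congrArg Sum.inl (Subtype.ext ?_)
      rw [← ins_del k W.val, h2, h1, ins_del]
    · obtain ⟨h1, h2⟩ := h
      exfalso
      have hW : W.val = wext k Z'.val := by
        rw [← ins_del k W.val, h2, h1, ins_del_wext Z'.2.1.1 (by omega)]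
      have hzk : Z'.val k = true := by
        have := Z'.2.1.2.2.2.1
        rwa [show k+1-1 = k from by omega] at this
      exact W.2.1.2.2.2.2 (k+1) (by omega) (by omega)
        (hW ▸ wext_brd (by omega) Z'.2.1.1 hzk)
    · obtain ⟨h1, h2⟩ := h
      exfalso
      have hW : W'.val = wext k Z.val := by
        rw [← ins_del k W'.val, ← h2, ← h1, ins_del_wext Z.2.1.1 (by omega)]
      have hzk : Z.val k = true := by
        have := Z.2.1.2.2.2.1
        rwa [show k+1-1 = k from by omega] at this
      exact W'.2.1.2.2.2.2 (k+1) (by omega) (by omega)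
        (hW ▸ wext_brd (by omega) Z.2.1.1 hzk)
    · obtain ⟨h1, -⟩ := h
      refine congrArg Sum.inr (Subtype.ext ?_)
      have e : wext k Z.val = wext k Z'.val := by
        rw [← ins_del_wext Z.2.1.1 (by omega : 1 ≤ k), h1,
          ins_del_wext Z'.2.1.1 (by omega : 1 ≤ k)]
      rw [← zext_wext Z.2.2, e, zext_wext Z'.2.2]
  · rintro ⟨u, b⟩
    by_cases h : Brd (2*k+1) (k+1) (ins k b u.val)
    · refine ⟨.inr ⟨zext k (ins k b u.val), good_zext_odd hk u.2.1 h, supp_zext _⟩, ?_⟩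
      refine Prod.ext (Subtype.ext ?_) ?_
      · show del k (wext k (zext k (ins k b u.val))) = u.val
        rw [wext_zext h u.2.2, del_ins]
      · exact (b_true (by omega) h u.2.1.1).symm
    · refine ⟨.inl ⟨ins k b u.val, good_ins_odd hk u.2.1 h, supp_ins u.2.2 (by omega)⟩, ?_⟩
      refine Prod.ext (Subtype.ext ?_) ?_
      · show del k (ins k b u.val) = u.val
        rw [del_ins]
      · exact ins_at b u.val

lemma card_R1 {k : ℕ} (hk : 2 ≤ k) : B (2*k+1) + B (k+1) = 2 * B (2*k) := by
  haveI := finite_T (2*k) (by omega)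
  haveI := finite_T (2*k+1) (by omega)
  haveI := finite_T (k+1) (by omega)
  have hb : Nat.card Bool = 2 := by simp [Nat.card_eq_fintype_card]
  have e := Nat.card_eq_of_bijective _ (oddF_bij k hk)
  rw [Nat.card_prod, Nat.card_sum, hb] at e
  rw [B_eq_card_T (by omega : 3 ≤ 2*k+1), B_eq_card_T (by omega : 3 ≤ k+1),
    B_eq_card_T (by omega : 3 ≤ 2*k)]
  omega


/-! ### The even case: strings of length `2k` vs `2k-1` and `k`. -/

lemma brd_del_even {k L : ℕ} (hL1 : 1 ≤ L) (hLk : L ≤ k-1) (hk : 2 ≤ k) (w : ℕ → Bool) :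
    Brd (2*k) L w ↔ Brd (2*k-1) L (del (k-1) w) := by
  unfold Brd
  constructor <;> intro h j hj
  · rw [del_ge w (by omega), del_lt w (by omega),
      show 2*k-1 - L + j + 1 = 2*k - L + j from by omega]
    exact h j hj
  · have := h j hj
    rw [del_ge w (by omega), del_lt w (by omega),
      show 2*k-1 - L + j + 1 = 2*k - L + j from by omega] at this
    exact this

lemma even_borderk {k : ℕ} (hk : 2 ≤ k) {w : ℕ → Bool} (hb : Brd (2*k) k w)
    (h0 : w 0 = true) (h3 : w (2*k-1) = true) : Brd (2*k-1) k (del (k-1) w) := by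
  have hb' : ∀ j < k, w (k + j) = w j := by
    intro j hj
    have := hb j hj
    rwa [show 2*k - k + j = k + j from by omega] at this
  intro j hj
  rw [show 2*k-1 - k + j = k-1+j from by omega]
  by_cases hc : j < k - 1
  · rw [del_ge w (by omega), del_lt w (by omega),
      show k-1+j+1 = k+j from by omega]
    exact hb' j hj
  · have hj' : j = k - 1 := by omega
    subst hj'
    rw [del_ge w (by omega), del_ge w (by omega),
      show k-1+(k-1)+1 = 2*k-1 from by omega, show k-1+1 = k from by omega, h3]
    have := hb' 0 (by omega)
    rw [show k + 0 = k from by omega, h0] at this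
    rw [this]

lemma good_del_even {k : ℕ} (hk : 3 ≤ k) {w : ℕ → Bool} (hw : Good (2*k) w)
    (hnb : ¬ Brd (2*k-1) k (del (k-1) w)) : Good (2*k-1) (del (k-1) w) := by
  obtain ⟨h0, h1, h2, h3, h4⟩ := hw
  refine ⟨?_, ?_, ?_, ?_, ?_⟩
  · rw [del_lt w (by omega)]; exact h0
  · rw [del_lt w (by omega)]; exact h1
  · rw [show 2*k-1-2 = 2*k-3 from by omega, del_ge w (by omega),
      show 2*k-3+1 = 2*k-2 from by omega]; exact h2
  · rw [show 2*k-1-1 = 2*k-2 from by omega, del_ge w (by omega),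
      show 2*k-2+1 = 2*k-1 from by omega]; exact h3
  · intro L hL hL2 hb
    obtain ⟨L', hL'2, hL'le, hb'⟩ := brd_small L hb hL2 hL
    by_cases hE : L' = k
    · exact hnb (hE ▸ hb')
    · exact h4 L' (by omega) (by omega)
        ((brd_del_even (by omega) (by omega : L' ≤ k-1) (by omega) w).mpr hb')

lemma good_ins_even {k : ℕ} (hk : 3 ≤ k) {b : Bool} {u : ℕ → Bool} (hu : Good (2*k-1) u) :
    Good (2*k) (ins (k-1) b u) := by
  obtain ⟨h0, h1, h2, h3, h4⟩ := hu
  refine ⟨?_, ?_, ?_, ?_, ?_⟩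
  · rw [ins_lt b u (by omega)]; exact h0
  · rw [ins_lt b u (by omega)]; exact h1
  · rw [ins_gt b u (by omega), show 2*k-2-1 = 2*k-1-2 from by omega]; exact h2
  · rw [ins_gt b u (by omega), show 2*k-1-1 = 2*k-1-1 from rfl,
      show 2*k-1-1 = 2*k-2 from by omega, show 2*k-2 = 2*k-1-1 from by omega]; exact h3
  · intro L hL hL2 hb
    obtain ⟨L', hL'2, hL'le, hb'⟩ := brd_small L hb hL2 hL
    by_cases hE : L' = k
    · rw [hE] at hb'
      have hb0 : ins (k-1) b u 0 = true := by rw [ins_lt b u (by omega)]; exact h0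
      have hb3 : ins (k-1) b u (2*k-1) = true := by
        rw [ins_gt b u (by omega), show 2*k-1-1 = 2*k-2 from by omega,
          show 2*k-2 = 2*k-1-1 from by omega]; exact h3
      have := even_borderk (by omega) hb' hb0 hb3
      rw [del_ins] at this
      exact h4 k (by omega) (by omega) this
    · have h' := (brd_del_even (by omega) (by omega : L' ≤ k-1) (by omega) _).mp hb'
      rw [del_ins] at h'
      exact h4 L' (by omega) (by omega) h'

/-- the extracted half-string of length `k` (even case). -/
def zextE (k : ℕ) (w : ℕ → Bool) : ℕ → Bool := fun i => if i < k then w (k+i) else false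

/-- the near-square string of length `2k` built from a string of length `k`. -/
def wextE (k : ℕ) (z : ℕ → Bool) : ℕ → Bool :=
  fun i => if i < k-1 then z i else if i = k-1 then false
    else if i ≤ 2*k-1 then z (i-k) else false

lemma supp_zextE {k : ℕ} (w : ℕ → Bool) : ∀ i, k ≤ i → zextE k w i = false :=
  fun i hi => if_neg (by omega)

lemma supp_wextE {k : ℕ} (hk : 1 ≤ k) (z : ℕ → Bool) : ∀ i, 2*k ≤ i → wextE k z i = false := by
  intro i hi
  unfold wextE
  rw [if_neg (by omega), if_neg (by omega), if_neg (by omega)]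

lemma wextE_lt {k i : ℕ} (z : ℕ → Bool) (h : i < k-1) : wextE k z i = z i := if_pos h

lemma wextE_mid {k : ℕ} (z : ℕ → Bool) (hk : 1 ≤ k) : wextE k z (k-1) = false := by
  unfold wextE
  rw [if_neg (by omega), if_pos rfl]

lemma wextE_ge {k i : ℕ} (z : ℕ → Bool) (h1 : k ≤ i) (h2 : i ≤ 2*k-1)
    (hk : 1 ≤ k := by omega) :
    wextE k z i = z (i-k) := by
  have a1 : ¬ (i < k-1) := by omega
  have a2 : ¬ (i = k-1) := by omega
  unfold wextE
  rw [if_neg a1, if_neg a2, if_pos h2]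

lemma brd_unfold_even {k : ℕ} (hk : 1 ≤ k) {w : ℕ → Bool} :
    Brd (2*k-1) k (del (k-1) w) ↔ ∀ j < k, del (k-1) w (k-1+j) = del (k-1) w j := by
  unfold Brd
  refine forall_congr' fun j => forall_congr' fun hj => ?_
  rw [show 2*k-1 - k + j = k-1+j from by omega]

lemma good_zextE {k : ℕ} (hk : 3 ≤ k) {w : ℕ → Bool} (hw : Good (2*k) w)
    (hb : Brd (2*k-1) k (del (k-1) w)) : Good k (zextE k w) := by
  obtain ⟨h0, h1, h2, h3, h4⟩ := hw
  have hbu := (brd_unfold_even (by omega)).mp hb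
  have ha : ∀ j < k-1, w (k+j) = w j := by
    intro j hj
    have := hbu j (by omega)
    rwa [del_ge w (by omega), show k-1+j+1 = k+j from by omega, del_lt w hj] at this
  have hb0 : w k = true := by
    have := hbu 0 (by omega)
    rwa [show k-1+0 = k-1 from by omega, del_ge w (by omega), show k-1+1 = k from by omega,
      del_lt w (by omega), h0] at this
  have hz : ∀ i < k, zextE k w i = w (k+i) := fun i hi => if_pos hi
  refine ⟨?_, ?_, ?_, ?_, ?_⟩
  · rw [hz 0 (by omega), show k+0 = k from by omega]; exact hb0
  · rw [hz 1 (by omega), ha 1 (by omega)]; exact h1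
  · rw [hz (k-2) (by omega), show k+(k-2) = 2*k-2 from by omega]; exact h2
  · rw [hz (k-1) (by omega), show k+(k-1) = 2*k-1 from by omega]; exact h3
  · intro L hL hL2 hbz
    refine h4 L (by omega) (by omega) ?_
    intro j hj
    have e1 := hbz j hj
    rw [hz _ (by omega), hz _ (by omega)] at e1
    rw [show 2*k - L + j = k + (k-L+j) from by omega, e1, ha j (by omega)]

lemma wextE_zextE {k : ℕ} (hk : 3 ≤ k) {w : ℕ → Bool} (hw : Good (2*k) w)
    (hs : ∀ i, 2*k ≤ i → w i = false)
    (hb : Brd (2*k-1) k (del (k-1) w)) : wextE k (zextE k w) = w := by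
  obtain ⟨h0, h1, h2, h3, h4⟩ := hw
  have hbu := (brd_unfold_even (by omega)).mp hb
  have ha : ∀ j < k-1, w (k+j) = w j := by
    intro j hj
    have := hbu j (by omega)
    rwa [del_ge w (by omega), show k-1+j+1 = k+j from by omega, del_lt w hj] at this
  have hmid : w (k-1) = false := by
    by_contra hc
    have hc' : w (k-1) = true := by
      cases hhh : w (k-1)
      · exact absurd hhh hc
      · rfl
    refine h4 k (by omega) (by omega) ?_
    intro j hj
    rw [show 2*k - k + j = k + j from by omega]
    by_cases hcc : j < k-1
    · exact ha j hcc
    · have : j = k-1 := by omega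
      subst this
      rw [show k + (k-1) = 2*k-1 from by omega, h3, hc']
  funext i
  by_cases c1 : i < k-1
  · rw [wextE_lt _ c1, zextE, if_pos (by omega)]
    exact ha i c1
  · by_cases c2 : i = k-1
    · subst c2
      rw [wextE_mid _ (by omega), hmid]
    · by_cases c3 : i ≤ 2*k-1
      · rw [wextE_ge _ (by omega) c3, zextE, if_pos (by omega),
          show k + (i-k) = i from by omega]
      · rw [supp_wextE (by omega) _ i (by omega), hs i (by omega)]

lemma good_wextE {k : ℕ} (hk : 3 ≤ k) {z : ℕ → Bool} (hz : Good k z) :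
    Good (2*k) (wextE k z) := by
  obtain ⟨h0, h1, h2, h3, h4⟩ := hz
  refine ⟨?_, ?_, ?_, ?_, ?_⟩
  · rw [wextE_lt _ (by omega)]; exact h0
  · rw [wextE_lt _ (by omega)]; exact h1
  · rw [show 2*k-2 = 2*k-2 from rfl, wextE_ge _ (by omega) (by omega),
      show 2*k-2-k = k-2 from by omega]; exact h2
  · rw [wextE_ge _ (by omega) (by omega), show 2*k-1-k = k-1 from by omega]; exact h3
  · intro L hL hL2 hb
    obtain ⟨L', hL'2, hL'le, hb'⟩ := brd_small L hb hL2 hL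
    by_cases hE : L' = k
    · rw [hE] at hb'
      have := hb' (k-1) (by omega)
      rw [show 2*k - k + (k-1) = 2*k-1 from by omega, wextE_ge _ (by omega) (by omega),
        show 2*k-1-k = k-1 from by omega, h3, wextE_mid _ (by omega)] at this
      exact Bool.true_eq_false.mp this
    · refine h4 L' (by omega) (by omega) ?_
      intro j hj
      have e1 := hb' j hj
      rw [show 2*k - L' + j = k + (k-L'+j) from by omega] at e1
      rw [wextE_ge _ (by omega) (by omega), show k + (k-L'+j) - k = k-L'+j from by omega,
        wextE_lt _ (by omega)] at e1
      rw [show k - L' + j = k - L' + j from rfl] at e1 ⊢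
      exact e1

lemma brd_del_wextE {k : ℕ} (hk : 2 ≤ k) {z : ℕ → Bool} (hz0 : z 0 = true)
    (hz3 : z (k-1) = true) : Brd (2*k-1) k (del (k-1) (wextE k z)) := by
  rw [brd_unfold_even (by omega)]
  intro j hj
  rw [del_ge _ (by omega), show k-1+j+1 = k+j from by omega,
    wextE_ge _ (by omega) (by omega), show k+j-k = j from by omega]
  by_cases hc : j < k-1
  · rw [del_lt _ hc, wextE_lt _ hc]
  · have : j = k-1 := by omega
    subst this
    rw [del_ge _ (by omega), show k-1+1 = k from by omega,
      wextE_ge _ (by omega) (by omega), show k-k = 0 from by omega, hz0, hz3]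

lemma zextE_wextE {k : ℕ} (hk : 1 ≤ k) {z : ℕ → Bool} (hzs : ∀ i, k ≤ i → z i = false) :
    zextE k (wextE k z) = z := by
  funext i
  unfold zextE
  by_cases h1 : i < k
  · rw [if_pos h1, wextE_ge _ (by omega) (by omega), show k + i - k = i from by omega]
  · rw [if_neg h1, hzs _ (by omega)]

/-- the gluing map for the even case. -/
def evenF (k : ℕ) (hk : 3 ≤ k) : T (2*k-1) × Bool ⊕ T k → T (2*k) :=
  fun q =>
    match q with
    | .inl p => ⟨ins (k-1) p.2 p.1.val, good_ins_even hk p.1.2.1,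
        fun i hi => supp_ins p.1.2.2 (by omega) i (by omega)⟩
    | .inr Z => ⟨wextE k Z.val, good_wextE hk Z.2.1, supp_wextE (by omega) Z.val⟩

lemma evenF_bij (k : ℕ) (hk : 3 ≤ k) : Function.Bijective (evenF k hk) := by
  constructor
  · rintro (⟨u, b⟩ | Z) (⟨u', b'⟩ | Z') h <;>
      simp only [evenF, Subtype.mk.injEq] at h
    · have h1 : u.val = u'.val := by
        rw [← del_ins (k-1) b u.val, h, del_ins]
      have h2 : b = b' := by
        rw [← ins_at (p := k-1) b u.val, h, ins_at]
      exact congrArg Sum.inl (Prod.ext (Subtype.ext h1) h2)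
    · exfalso
      have hzk : Z'.val (k-1) = true := Z'.2.1.2.2.2.1
      have hb := brd_del_wextE (by omega : 2 ≤ k) Z'.2.1.1 hzk
      rw [← h, del_ins] at hb
      exact u.2.1.2.2.2.2 k (by omega) (by omega) hb
    · exfalso
      have hzk : Z.val (k-1) = true := Z.2.1.2.2.2.1
      have hb := brd_del_wextE (by omega : 2 ≤ k) Z.2.1.1 hzk
      rw [h, del_ins] at hb
      exact u'.2.1.2.2.2.2 k (by omega) (by omega) hb
    · refine congrArg Sum.inr (Subtype.ext ?_)
      rw [← zextE_wextE (by omega : 1 ≤ k) Z.2.2, h, zextE_wextE (by omega : 1 ≤ k) Z'.2.2]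
  · rintro ⟨w, hw, hsupp⟩
    by_cases h : Brd (2*k-1) k (del (k-1) w)
    · refine ⟨.inr ⟨zextE k w, good_zextE hk hw h, supp_zextE w⟩, Subtype.ext ?_⟩
      exact wextE_zextE hk hw hsupp h
    · refine ⟨.inl (⟨del (k-1) w,  good_del_even hk hw h,
        supp_del (fun i hi => hsupp i (by omega)) (by omega)⟩, w (k-1)), Subtype.ext ?_⟩
      exact ins_del (k-1) w

lemma card_R2 {k : ℕ} (hk : 3 ≤ k) : B (2*k) = 2 * B (2*k-1) + B k := by
  haveI := finite_T (2*k) (by omega)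
  haveI := finite_T (2*k-1) (by omega)
  haveI := finite_T k (by omega)
  have hb : Nat.card Bool = 2 := by simp [Nat.card_eq_fintype_card]
  have e := Nat.card_eq_of_bijective _ (evenF_bij k hk)
  rw [Nat.card_sum, Nat.card_prod, hb] at e
  rw [B_eq_card_T (by omega : 3 ≤ 2*k), B_eq_card_T (by omega : 3 ≤ 2*k-1),
    B_eq_card_T (by omega : 3 ≤ k)]
  omega

/-! ### The two recurrences for `cstar`. -/

lemma R1' {j : ℕ} (hj : 2 ≤ j) : cstar (2*j+1) + cstar (j+1) = 2 * cstar (2*j) := by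
  rw [cstar_eq (by omega : 3 ≤ 2*j+1), cstar_eq (by omega : 3 ≤ j+1),
    cstar_eq (by omega : 3 ≤ 2*j)]
  exact card_R1 hj

lemma R2' {k : ℕ} (hk : 3 ≤ k) : cstar (2*k) = 2 * cstar (2*k-1) + cstar k := by
  rw [cstar_eq (by omega : 3 ≤ 2*k), cstar_eq (by omega : 3 ≤ 2*k-1),
    cstar_eq (by omega : 3 ≤ k)]
  exact card_R2 hk

/-- the key integer identity, proved by induction from the two recurrences. -/
lemma EK (K : ℕ) (hK : 2 ≤ K) :
    2 * cstar (2*K+1) + 2 * cstar (K+1) +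
      ∑ j ∈ Finset.Icc 3 K, cstar j * 4^(K+1-j) = 4^(K-1) := by
  induction K, hK using Nat.le_induction with
  | base =>
    rw [Finset.Icc_eq_empty (by omega), Finset.sum_empty]
    norm_num
    decide
  | succ K hK ih =>
    have h1 : cstar (2*K+3) + cstar (K+2) = 2 * cstar (2*K+2) := by
      have h := R1' (j := K+1) (by omega)
      rw [show 2*(K+1)+1 = 2*K+3 from by omega, show K+1+1 = K+2 from by omega,
        show 2*(K+1) = 2*K+2 from by omega] at h
      exact h
    have h2 : cstar (2*K+2) = 2 * cstar (2*K+1) + cstar (K+1) := by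
      have h := R2' (k := K+1) (by omega)
      rw [show 2*(K+1)-1 = 2*K+1 from by omega] at h
      rw [show 2*(K+1) = 2*K+2 from by omega] at h
      exact h
    rw [show 2*(K+1)+1 = 2*K+3 from by omega, show K+1+1 = K+2 from by omega,
      show K+1-1 = K from by omega]
    rw [Finset.sum_Icc_succ_top (show 3 ≤ K+1 from by omega)]
    have hfour : ∀ j ∈ Finset.Icc 3 K, cstar j * 4^(K+2-j) = 4*(cstar j * 4^(K+1-j)) := by
      intro j hj
      rw [Finset.mem_Icc] at hj
      rw [show K+2-j = (K+1-j)+1 from by omega, pow_succ]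
      ring
    have hs : ∑ j ∈ Finset.Icc 3 K, cstar j * 4^(K+2-j)
        = 4 * ∑ j ∈ Finset.Icc 3 K, cstar j * 4^(K+1-j) := by
      rw [Finset.mul_sum]
      exact Finset.sum_congr rfl hfour
    rw [hs, show K+2-(K+1) = 1 from by omega, pow_one]
    have hp : 4*4^(K-1) = (4:ℕ)^K := by
      rw [← pow_succ']
      congr 1
      omega
    omega

lemma cstar_le (m : ℕ) : cstar m ≤ 2^m := by
  rw [cstar]
  refine le_trans (Fintype.card_subtype_le _) ?_
  simp

/-! ### The analytic conclusion. -/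

lemma seq_eq {K : ℕ} (hK : 2 ≤ K) :
    (c (2*K+2) : ℝ)/2^(2*K+2)
      = 1/16 - (∑ j ∈ Finset.Icc 3 K, (cstar j : ℝ)/4^j)
        - 2*(cstar (K+1) : ℝ)/4^(K+1) := by
  have h4 : ((4:ℝ))^(K+1) ≠ 0 := by positivity
  have hcast := congrArg (fun n : ℕ => (n:ℝ)) (EK K hK)
  push_cast at hcast
  have hsum : (∑ j ∈ Finset.Icc 3 K, (cstar j : ℝ)/4^j)
      = (∑ j ∈ Finset.Icc 3 K, (cstar j : ℝ) * 4^(K+1-j)) / 4^(K+1) := by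
    rw [Finset.sum_div]
    refine Finset.sum_congr rfl fun j hj => ?_
    rw [Finset.mem_Icc] at hj
    rw [div_eq_div_iff (by positivity) (by positivity), mul_assoc, ← pow_add,
      show K+1-j+j = K+1 from by omega]
  have hc : (c (2*K+2) : ℝ) = 2*(cstar (2*K+1) : ℝ) := by
    rw [c, show 2*K+2-1 = 2*K+1 from by omega]
    push_cast
    ring
  have hpow : (2:ℝ)^(2*K+2) = 4^(K+1) := by
    rw [show 2*K+2 = 2*(K+1) from by omega, pow_mul]
    norm_num
  have h16 : (1/16:ℝ) = 4^(K-1)/4^(K+1) := by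
    rw [show K+1 = (K-1)+2 from by omega, pow_add]
    have hne : (4:ℝ)^(K-1) ≠ 0 := by positivity
    field_simp
    ring
  rw [hc, hpow, hsum, h16, div_sub_div_same, div_sub_div_same]
  have hnum : 2*((cstar (2*K+1) : ℝ)) = 4^(K-1)
      - (∑ j ∈ Finset.Icc 3 K, (cstar j : ℝ) * 4^(K+1-j)) - 2*(cstar (K+1) : ℝ) := by
    linarith [hcast]
  rw [hnum]

end PA

open Filter in
/-- If `α = lim c_n / 2^n`, then the series `∑_{n≥4} c_n/4^n` converges and
`α = 1/16 - 2 ∑_{n=4}^∞ c_n/4^n`. -/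
theorem alpha_series (α : ℝ)
    (hα : Tendsto (fun n : ℕ => (c n : ℝ) / 2 ^ n) atTop (nhds α)) :
    Summable (fun n : ℕ => (c (n + 4) : ℝ) / 4 ^ (n + 4)) ∧
      α = 1 / 16 - 2 * ∑' n : ℕ, (c (n + 4) : ℝ) / 4 ^ (n + 4) := by
  set f : ℕ → ℝ := fun n => (c (n + 4) : ℝ) / 4 ^ (n + 4) with hf
  have hc_le : ∀ n : ℕ, (c (n+4) : ℝ) ≤ 2^(n+4) := by
    intro n
    rw [c, show n+4-1 = n+3 from by omega]
    have h1 : 2 * cstar (n+3) ≤ 2^(n+4) := by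
      have := PA.cstar_le (n+3)
      have e : (2:ℕ)^(n+4) = 2*2^(n+3) := by rw [pow_succ]; ring
      omega
    exact_mod_cast h1
  have hf_nonneg : ∀ n, 0 ≤ f n := by
    intro n
    rw [hf]
    positivity
  have hf_le : ∀ n, f n ≤ (1/2:ℝ)^n := by
    intro n
    rw [hf]
    have h1 : (c (n+4) : ℝ)/4^(n+4) ≤ (2:ℝ)^(n+4)/4^(n+4) := by
      gcongr
      exact hc_le n
    have h2 : (2:ℝ)^(n+4)/4^(n+4) = (1/2:ℝ)^(n+4) := by
      rw [div_eq_iff (by positivity), ← mul_pow]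
      norm_num
    have h3 : ((1:ℝ)/2)^(n+4) ≤ (1/2:ℝ)^n :=
      pow_le_pow_of_le_one (by norm_num) (by norm_num) (by omega)
    linarith
  have hS : Summable f :=
    Summable.of_nonneg_of_le hf_nonneg hf_le
      (summable_geometric_of_lt_one (by norm_num) (by norm_num))
  refine ⟨hS, ?_⟩
  -- the subsequence `n = 2K+2` of the given limit
  have hL : Tendsto (fun K : ℕ => (c (2*K+2) : ℝ)/2^(2*K+2)) atTop (nhds α) := by
    exact hα.comp (tendsto_atTop_atTop.mpr fun b => ⟨b, fun a ha => by omega⟩)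
  -- partial sums converge
  have hpart : Tendsto (fun K : ℕ => ∑ j ∈ Finset.Icc 3 K, (cstar j : ℝ)/4^j) atTop
      (nhds (2 * ∑' n, f n)) := by
    have hps := hS.hasSum.tendsto_sum_nat
    have hcomp : Tendsto (fun K : ℕ => ∑ n ∈ Finset.range (K-2), f n) atTop
        (nhds (∑' n, f n)) :=
      hps.comp (tendsto_atTop_atTop.mpr fun b => ⟨b+2, fun a ha => by omega⟩)
    have heq : ∀ K : ℕ, (∑ j ∈ Finset.Icc 3 K, (cstar j : ℝ)/4^j)
        = 2 * ∑ n ∈ Finset.range (K-2), f n := by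
      intro K
      rw [Finset.mul_sum]
      rw [show Finset.Icc 3 K = Finset.Ico 3 (K+1) from by rw [Finset.Ico_add_one_right_eq_Icc]]
      rw [Finset.sum_Ico_eq_sum_range]
      rw [show K+1-3 = K-2 from by omega]
      refine Finset.sum_congr rfl fun i _ => ?_
      simp only [hf, c]
      rw [show i+4-1 = i+3 from by omega, show 3+i = i+3 from by omega]
      push_cast
      rw [show i+4 = (i+3)+1 from by omega, pow_succ]
      have hne : ((4:ℝ))^(i+3) ≠ 0 := by positivity
      field_simp
      ring
    exact Tendsto.congr (fun K => (heq K).symm) (hcomp.const_mul 2)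
  -- the tail term tends to zero
  have htail : Tendsto (fun K : ℕ => 2*(cstar (K+1) : ℝ)/4^(K+1)) atTop (nhds 0) := by
    have h0 : Tendsto (fun K : ℕ => 4 * f (K-2)) atTop (nhds (4 * 0)) :=
      (hS.tendsto_atTop_zero.comp
        (tendsto_atTop_atTop.mpr fun b => ⟨b+2, fun a ha => by omega⟩)).const_mul 4
    rw [mul_zero] at h0
    refine h0.congr' ?_
    filter_upwards [eventually_ge_atTop 2] with K hK
    simp only [hf, c]
    rw [show K-2+4 = K+2 from by omega, show K+2-1 = K+1 from by omega]
    push_cast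
    rw [show K+2 = (K+1)+1 from by omega, pow_succ]
    have hne : ((4:ℝ))^(K+1) ≠ 0 := by positivity
    field_simp
  have hR : Tendsto (fun K : ℕ => 1/16 - (∑ j ∈ Finset.Icc 3 K, (cstar j : ℝ)/4^j)
      - 2*(cstar (K+1) : ℝ)/4^(K+1)) atTop (nhds (1/16 - 2 * ∑' n, f n - 0)) :=
    (tendsto_const_nhds.sub hpart).sub htail
  have hR' : Tendsto (fun K : ℕ => (c (2*K+2) : ℝ)/2^(2*K+2)) atTop
      (nhds (1/16 - 2 * ∑' n, f n - 0)) := by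
    refine hR.congr' ?_
    filter_upwards [eventually_ge_atTop 2] with K hK
    exact (PA.seq_eq hK).symm
  have := tendsto_nhds_unique hL hR'
  rw [sub_zero] at this
  exact this
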